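/- Let x, y be nonzero vectors in ℂⁿ. There exists a Hermitian positive semidefinite matrix Δ ∈ ℂ^{n,n} with Δx = y if and only if x*y > 0 (i.e., x*y is real and positive). -/

import Mathlib

open Matrix
open scoped ComplexOrder

/-- There is a positive semidefinite `Δ` with `Δx = y` iff `x*y > 0`. -/
theorem psd_mapping_exists {n : ℕ} (x y : Fin n → ℂ) (hx : x ≠ 0) (hy : y ≠ 0) :
    (∃ Δ : Matrix (Fin n) (Fin n) ℂ, Δ.PosSemidef ∧ Δ.mulVec x = y) ↔
      (star x ⬝ᵥ y).im = 0 ∧ 0 < (star x ⬝ᵥ y).re := by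
  constructor
  · rintro ⟨Δ, hΔ, hΔx⟩
    have hnn : 0 ≤ star x ⬝ᵥ y := hΔx ▸ hΔ.dotProduct_mulVec_nonneg x
    have hne : star x ⬝ᵥ y ≠ 0 := by
      intro h0
      have := (hΔ.dotProduct_mulVec_zero_iff x).mp (by rw [hΔx]; exact h0)
      exact hy (hΔx ▸ this)
    rw [Complex.le_def] at hnn
    refine ⟨hnn.2.symm, lt_of_le_of_ne hnn.1 ?_⟩
    intro h
    exact hne (Complex.ext h.symm hnn.2.symm)
  · rintro ⟨him, hre⟩
    set c : ℂ := star x ⬝ᵥ y with hc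
    have hcr : (starRingEnd ℂ) c = c := Complex.conj_eq_iff_im.mpr him
    have hc0 : c ≠ 0 := fun h => by simp [h] at hre
    refine ⟨c⁻¹ • vecMulVec y (star y), posSemidef_iff_dotProduct_mulVec.mpr ⟨?_, ?_⟩, ?_⟩
    · -- Hermitian
      ext i j
      simp [vecMulVec, conjTranspose_apply, mul_comm, map_inv₀, hcr]
    · -- nonneg quadratic form
      intro v
      have h1 : (vecMulVec y (star y)).mulVec v = (star y ⬝ᵥ v) • y := by
        ext i
        simp [vecMulVec, mulVec, dotProduct, Finset.mul_sum, mul_comm, mul_left_comm]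
      have h2 : star v ⬝ᵥ ((c⁻¹ • vecMulVec y (star y)).mulVec v)
          = c⁻¹ * ((star y ⬝ᵥ v) * (star v ⬝ᵥ y)) := by
        rw [smul_mulVec, dotProduct_smul, h1, dotProduct_smul]
        ring_nf
      rw [h2]
      have h3 : star v ⬝ᵥ y = (starRingEnd ℂ) (star y ⬝ᵥ v) := by
        simp [dotProduct, map_sum, mul_comm]
      rw [h3, Complex.le_def]
      constructor
      · simp only [Complex.zero_re]
        have : ((star y ⬝ᵥ v) * (starRingEnd ℂ) (star y ⬝ᵥ v)).re = Complex.normSq (star y ⬝ᵥ v) := by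
          rw [Complex.mul_conj]; simp
        have him' : ((star y ⬝ᵥ v) * (starRingEnd ℂ) (star y ⬝ᵥ v)).im = 0 := by
          rw [Complex.mul_conj]; simp
        rw [Complex.mul_re, this, him']
        simp only [mul_zero, sub_zero]
        apply mul_nonneg
        · rw [Complex.inv_re]
          exact div_nonneg hre.le (Complex.normSq_nonneg _)
        · exact Complex.normSq_nonneg _
      · simp only [Complex.zero_im, Complex.mul_im]
        rw [Complex.mul_conj]
        have : c⁻¹.im = 0 := by
          rw [Complex.inv_im, him]; simp
        simp only [this, zero_mul, add_zero, mul_zero, zero_add,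
          Complex.conj_re, Complex.conj_im]
        ring
    · -- maps x to y
      have hcx : star y ⬝ᵥ x = c := by
        rw [← hcr, hc]
        simp [dotProduct, map_sum, mul_comm]
      rw [smul_mulVec]
      have h1 : (vecMulVec y (star y)).mulVec x = (star y ⬝ᵥ x) • y := by
        ext i
        simp [vecMulVec, mulVec, dotProduct, Finset.mul_sum, mul_comm, mul_left_comm]
      rw [h1, hcx, smul_smul, inv_mul_cancel₀ hc0, one_smul]
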